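/- (Nash equilibrium / saddle point of the generalised IRL game.) In the finite MDP setting with geometric weights η(k) = (1−γ_η)γ_η^k, γ_η ∈ (0,1), let p₀ ∈ PMF S, π_E a policy, Ω̄ : (S → S × A → ℝ) → ℝ strictly concave, ψ : (S × A → ℝ) → ℝ convex, 𝒟 = { (s₀ ↦ (s,a) ↦ μ_π((s,a)|s₀)) : π a policy }, and L̄(μ,c) = −Ω̄(μ) − ψ(c) + ∑_{s₀} p₀(s₀) ∑_{(s,a)} c(s,a) · (μ(s₀)(s,a) − μ_{π_E}((s,a)|s₀)). Assume 𝒟 is convex, c̃ maximizes c ↦ inf_{μ ∈ 𝒟} L̄(μ,c), and μ̃ minimizes μ ↦ L̄(μ,c̃) over 𝒟. Then (μ̃, c̃) is a saddle point: for every c : S × A → ℝ and every μ ∈ 𝒟, L̄(μ̃, c) ≤ L̄(μ̃, c̃) ≤ L̄(μ, c̃). -/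

import Mathlib

open scoped BigOperators Classical

/-- `n`-step state–action distribution of the stationary policy `π` started at a state. -/
noncomputable def PstepS {S A : Type*} [Fintype S] [Fintype A]
    (P : S × A → PMF S) (π : S → PMF A) : ℕ → S → S × A → ℝ
  | 0, s₀, x => if x.1 = s₀ then (π x.1 x.2).toReal else 0
  | n + 1, s₀, x => ∑ y : S × A, PstepS P π n s₀ y * (P y x.1).toReal * (π x.1 x.2).toReal

/-- `n`-step state–action distribution of `π` started at a state–action pair. -/
noncomputable def PstepSA {S A : Type*} [Fintype S] [Fintype A]
    (P : S × A → PMF S) (π : S → PMF A) : ℕ → S × A → S × A → ℝ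
  | 0, y, x => if x = y then 1 else 0
  | n + 1, y, x => ∑ z : S × A, PstepSA P π n y z * (P z x.1).toReal * (π x.1 x.2).toReal

/-- η-weighted future state distribution, started at a state. -/
noncomputable def PetaS {S A : Type*} [Fintype S] [Fintype A]
    (P : S × A → PMF S) (π : S → PMF A) (η : ℕ → ℝ) (s₀ : S) (x : S × A) : ℝ :=
  ∑' k, η k * PstepS P π k s₀ x

/-- η-weighted future state distribution, started at a state–action pair. -/
noncomputable def PetaSA {S A : Type*} [Fintype S] [Fintype A]
    (P : S × A → PMF S) (π : S → PMF A) (η : ℕ → ℝ) (y : S × A) (x : S × A) : ℝ :=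
  ∑' k, η k * PstepSA P π k y x

/-- γ-discounted occupancy measure, started at a state. -/
noncomputable def rhoS {S A : Type*} [Fintype S] [Fintype A]
    (P : S × A → PMF S) (π : S → PMF A) (γ : ℝ) (s₀ : S) (x : S × A) : ℝ :=
  ∑' t, γ ^ t * PstepS P π t s₀ x

/-- γ-discounted occupancy measure, started at a state–action pair. -/
noncomputable def rhoSA {S A : Type*} [Fintype S] [Fintype A]
    (P : S × A → PMF S) (π : S → PMF A) (γ : ℝ) (y : S × A) (x : S × A) : ℝ :=
  ∑' t, γ ^ t * PstepSA P π t y x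

/-- η-weighted, γ-discounted future occupancy measure `μ_π`. -/
noncomputable def muS {S A : Type*} [Fintype S] [Fintype A]
    (P : S × A → PMF S) (π : S → PMF A) (γ : ℝ) (η : ℕ → ℝ) (s₀ : S) (x : S × A) : ℝ :=
  ∑' t, ∑' k, γ ^ t * η k * PstepS P π (t + k) s₀ x

lemma pmf_toReal_le_one {α : Type*} (p : PMF α) (a : α) : (p a).toReal ≤ 1 := by
  rw [← ENNReal.toReal_one]
  exact ENNReal.toReal_mono (by simp) (p.coe_le_one a)

lemma pmf_sum_toReal {α : Type*} [Fintype α] (p : PMF α) : ∑ a, (p a).toReal = 1 := by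
  rw [← ENNReal.toReal_sum (fun a _ => p.apply_ne_top a), ← tsum_fintype (L := .unconditional _), p.tsum_coe,
    ENNReal.toReal_one]

lemma PstepS_nonneg {S A : Type*} [Fintype S] [Fintype A]
    (P : S × A → PMF S) (π : S → PMF A) (n : ℕ) (s₀ : S) (x : S × A) :
    0 ≤ PstepS P π n s₀ x := by
  induction n generalizing x with
  | zero =>
      simp only [PstepS]
      split <;> simp [ENNReal.toReal_nonneg]
  | succ n ih =>
      exact Finset.sum_nonneg fun y _ =>
        mul_nonneg (mul_nonneg (ih y) ENNReal.toReal_nonneg) ENNReal.toReal_nonneg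

lemma PstepS_sum {S A : Type*} [Fintype S] [Fintype A]
    (P : S × A → PMF S) (π : S → PMF A) (n : ℕ) (s₀ : S) :
    ∑ x : S × A, PstepS P π n s₀ x = 1 := by
  induction n with
  | zero =>
      simp only [PstepS]
      rw [Fintype.sum_prod_type]
      rw [Finset.sum_eq_single s₀]
      · simpa using pmf_sum_toReal (π s₀)
      · intro s _ hs
        simp [hs]
      · simp
  | succ n ih =>
      simp only [PstepS]
      rw [Finset.sum_comm]
      have : ∀ y : S × A, ∑ x : S × A,
          PstepS P π n s₀ y * (P y x.1).toReal * (π x.1 x.2).toReal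
          = PstepS P π n s₀ y := by
        intro y
        rw [Fintype.sum_prod_type]
        have h1 : ∀ s : S, ∑ a : A, PstepS P π n s₀ y * (P y s).toReal * (π s a).toReal
            = PstepS P π n s₀ y * (P y s).toReal := by
          intro s
          rw [← Finset.mul_sum, pmf_sum_toReal, mul_one]
        simp only [h1]
        rw [← Finset.mul_sum, pmf_sum_toReal, mul_one]
      simp only [this, ih]

lemma PstepS_le_one {S A : Type*} [Fintype S] [Fintype A]
    (P : S × A → PMF S) (π : S → PMF A) (n : ℕ) (s₀ : S) (x : S × A) :
    PstepS P π n s₀ x ≤ 1 := by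
  calc PstepS P π n s₀ x ≤ ∑ y : S × A, PstepS P π n s₀ y :=
        Finset.single_le_sum (fun y _ => PstepS_nonneg P π n s₀ y) (Finset.mem_univ x)
    _ = 1 := PstepS_sum P π n s₀

lemma muS_mem_Icc {S A : Type*} [Fintype S] [Fintype A]
    (P : S × A → PMF S) (π : S → PMF A) {γ γη : ℝ}
    (hγ : γ ∈ Set.Ioo (0:ℝ) 1) (hγη : γη ∈ Set.Ioo (0:ℝ) 1)
    (η : ℕ → ℝ) (hη : ∀ k, η k = (1 - γη) * γη ^ k) (s₀ : S) (x : S × A) :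
    muS P π γ η s₀ x ∈ Set.Icc 0 ((1 - γ)⁻¹) := by
  obtain ⟨hγ0, hγ1⟩ := hγ
  obtain ⟨hγη0, hγη1⟩ := hγη
  set f : ℕ → ℕ → ℝ := fun t k => γ ^ t * η k * PstepS P π (t + k) s₀ x with hf
  have hηk : ∀ k, 0 ≤ η k := fun k => by
    rw [hη k]
    exact mul_nonneg (by linarith) (pow_nonneg hγη0.le k)
  have hf0 : ∀ t k, 0 ≤ f t k := fun t k =>
    mul_nonneg (mul_nonneg (by positivity) (hηk k)) (PstepS_nonneg P π _ s₀ x)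
  have hfle : ∀ t k, f t k ≤ γ ^ t * ((1 - γη) * γη ^ k) := by
    intro t k
    have := PstepS_le_one P π (t + k) s₀ x
    calc f t k ≤ γ ^ t * η k * 1 :=
          mul_le_mul_of_nonneg_left this (mul_nonneg (by positivity) (hηk k))
      _ = γ ^ t * ((1 - γη) * γη ^ k) := by rw [mul_one, hη k]
  have hgeoeta : Summable (fun k : ℕ => γη ^ k) := summable_geometric_of_lt_one hγη0.le hγη1
  have hmaj : ∀ t : ℕ, Summable (fun k => γ ^ t * ((1 - γη) * γη ^ k)) :=
    fun t => (hgeoeta.mul_left _).mul_left _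
  have hsumk : ∀ t, Summable (fun k => f t k) := fun t =>
    Summable.of_nonneg_of_le (hf0 t) (hfle t) (hmaj t)
  have htsumk_le : ∀ t, ∑' k, f t k ≤ γ ^ t := by
    intro t
    calc ∑' k, f t k ≤ ∑' k, γ ^ t * ((1 - γη) * γη ^ k) :=
          Summable.tsum_le_tsum (hfle t) (hsumk t) (hmaj t)
      _ = γ ^ t * ((1 - γη) * (1 - γη)⁻¹) := by
          rw [tsum_mul_left, tsum_mul_left, tsum_geometric_of_lt_one hγη0.le hγη1]
      _ = γ ^ t := by
          rw [mul_inv_cancel₀ (by linarith), mul_one]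
  have htsumk0 : ∀ t, 0 ≤ ∑' k, f t k := fun t => tsum_nonneg (hf0 t)
  have hgeo : Summable (fun t : ℕ => γ ^ t) := summable_geometric_of_lt_one hγ0.le hγ1
  have hsumt : Summable fun t => ∑' k, f t k :=
    Summable.of_nonneg_of_le htsumk0 htsumk_le hgeo
  constructor
  · exact tsum_nonneg fun t => htsumk0 t
  · calc muS P π γ η s₀ x = ∑' t, ∑' k, f t k := rfl
      _ ≤ ∑' t, γ ^ t := Summable.tsum_le_tsum htsumk_le hsumt hgeo
      _ = (1 - γ)⁻¹ := tsum_geometric_of_lt_one hγ0.le hγ1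

theorem stmt11 {S A : Type*} [Fintype S] [Fintype A] [Nonempty S] [Nonempty A]
    (P : S × A → PMF S) (γ γη : ℝ)
    (hγ : γ ∈ Set.Ioo (0 : ℝ) 1) (hγη : γη ∈ Set.Ioo (0 : ℝ) 1)
    (η : ℕ → ℝ) (hη : ∀ k, η k = (1 - γη) * γη ^ k)
    (p₀ : PMF S) (πE : S → PMF A)
    (Ωb : (S → S × A → ℝ) → ℝ) (hΩ : StrictConcaveOn ℝ Set.univ Ωb)
    (ψ : (S × A → ℝ) → ℝ) (hψ : ConvexOn ℝ Set.univ ψ)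
    -- the set of η-weighted occupancy measures
    (𝒟 : Set (S → S × A → ℝ))
    (h𝒟 : 𝒟 = { μ | ∃ π : S → PMF A, μ = fun s₀ x => muS P π γ η s₀ x })
    (h𝒟conv : Convex ℝ 𝒟)
    -- the IRL Lagrangian
    (Lbar : (S → S × A → ℝ) → (S × A → ℝ) → ℝ)
    (hL : Lbar = fun μ c => -Ωb μ - ψ c +
      ∑ s₀ : S, (p₀ s₀).toReal * ∑ x : S × A, c x * (μ s₀ x - muS P πE γ η s₀ x))
    (ctil : S × A → ℝ) (μtil : S → S × A → ℝ)
    -- `ctil` maximizes `c ↦ inf_{μ ∈ 𝒟} L̄(μ, c)`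
    (hctil : ∀ c : S × A → ℝ, (⨅ μ : 𝒟, Lbar (↑μ) c) ≤ ⨅ μ : 𝒟, Lbar (↑μ) ctil)
    -- `μtil` minimizes `μ ↦ L̄(μ, ctil)` over `𝒟`
    (hμtil : μtil ∈ 𝒟 ∧ ∀ μ ∈ 𝒟, Lbar μtil ctil ≤ Lbar μ ctil) :
    -- `(μtil, ctil)` is a saddle point of `L̄`
    (∀ c : S × A → ℝ, Lbar μtil c ≤ Lbar μtil ctil) ∧
    (∀ μ ∈ 𝒟, Lbar μtil ctil ≤ Lbar μ ctil) := by
  classical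
  obtain ⟨hμD, hμmin⟩ := hμtil
  haveI : Nonempty 𝒟 := ⟨⟨μtil, hμD⟩⟩
  refine ⟨?_, hμmin⟩
  intro c
  by_contra hcon
  push_neg at hcon
  -- the bilinear-affine part of the Lagrangian
  set A' : (S → S × A → ℝ) → (S × A → ℝ) → ℝ :=
    fun μ c' => ∑ s₀ : S, (p₀ s₀).toReal *
      ∑ x : S × A, c' x * (μ s₀ x - muS P πE γ η s₀ x) with hA'
  have hLbar : ∀ μ c', Lbar μ c' = -Ωb μ - ψ c' + A' μ c' := by
    intro μ c'
    simp only [hL, hA']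
  have hK1 : ∀ (c' : S × A → ℝ) (a b : S → S × A → ℝ) (u v : ℝ), u + v = 1 →
      A' (u • a + v • b) c' = u * A' a c' + v * A' b c' := by
    intro c' a b u v huv
    simp only [hA']
    rw [Finset.mul_sum, Finset.mul_sum, ← Finset.sum_add_distrib]
    refine Finset.sum_congr rfl fun s₀ _ => ?_
    have hin : ∑ x : S × A, c' x * ((u • a + v • b) s₀ x - muS P πE γ η s₀ x)
        = u * (∑ x : S × A, c' x * (a s₀ x - muS P πE γ η s₀ x))
          + v * (∑ x : S × A, c' x * (b s₀ x - muS P πE γ η s₀ x)) := by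
      rw [Finset.mul_sum, Finset.mul_sum, ← Finset.sum_add_distrib]
      refine Finset.sum_congr rfl fun x _ => ?_
      simp only [Pi.add_apply, Pi.smul_apply, smul_eq_mul]
      linear_combination c' x * muS P πE γ η s₀ x * huv
    rw [hin]; ring
  have hK2 : ∀ (μ : S → S × A → ℝ) (c1 c2 : S × A → ℝ) (u v : ℝ),
      A' μ (u • c1 + v • c2) = u * A' μ c1 + v * A' μ c2 := by
    intro μ c1 c2 u v
    simp only [hA']
    rw [Finset.mul_sum, Finset.mul_sum, ← Finset.sum_add_distrib]
    refine Finset.sum_congr rfl fun s₀ _ => ?_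
    have hin : ∑ x : S × A, (u • c1 + v • c2) x * (μ s₀ x - muS P πE γ η s₀ x)
        = u * (∑ x : S × A, c1 x * (μ s₀ x - muS P πE γ η s₀ x))
          + v * (∑ x : S × A, c2 x * (μ s₀ x - muS P πE γ η s₀ x)) := by
      rw [Finset.mul_sum, Finset.mul_sum, ← Finset.sum_add_distrib]
      refine Finset.sum_congr rfl fun x _ => ?_
      simp only [Pi.add_apply, Pi.smul_apply, smul_eq_mul]
      ring
    rw [hin]; ring
  -- convexity in μ
  have hconv : ∀ (c' : S × A → ℝ) (a b : S → S × A → ℝ) (u v : ℝ),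
      0 ≤ u → 0 ≤ v → u + v = 1 →
      Lbar (u • a + v • b) c' ≤ u * Lbar a c' + v * Lbar b c' := by
    intro c' a b u v hu hv huv
    have hΩc := hΩ.concaveOn.2 (Set.mem_univ a) (Set.mem_univ b) hu hv huv
    simp only [smul_eq_mul] at hΩc
    have hA := hK1 c' a b u v huv
    have hpsi : u * ψ c' + v * ψ c' = ψ c' := by rw [← add_mul, huv, one_mul]
    simp only [hLbar]
    linarith
  -- strict convexity in μ
  have hstrict : ∀ (a b : S → S × A → ℝ) (u v : ℝ), a ≠ b → 0 < u → 0 < v → u + v = 1 →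
      Lbar (u • a + v • b) ctil < u * Lbar a ctil + v * Lbar b ctil := by
    intro a b u v hab hu hv huv
    have hΩc := hΩ.2 (Set.mem_univ a) (Set.mem_univ b) hab hu hv huv
    simp only [smul_eq_mul] at hΩc
    have hA := hK1 ctil a b u v huv
    have hpsi : u * ψ ctil + v * ψ ctil = ψ ctil := by rw [← add_mul, huv, one_mul]
    simp only [hLbar]
    linarith
  set g : (S → S × A → ℝ) → ℝ := fun μ => Lbar μ c - Lbar μ ctil with hg
  set Δ : ℝ := g μtil with hΔdef
  have hΔ : 0 < Δ := by
    rw [hΔdef, hg]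
    simp only [sub_pos]
    exact hcon
  -- g is affine
  have hgaff : ∀ (a b : S → S × A → ℝ) (u v : ℝ), u + v = 1 →
      g (u • a + v • b) = u * g a + v * g b := by
    intro a b u v huv
    have h1 := hK1 c a b u v huv
    have h2 := hK1 ctil a b u v huv
    simp only [hg, hLbar]
    linear_combination h1 - h2 - (ψ ctil - ψ c) * huv
  -- continuity facts
  have hΩcont : Continuous Ωb := by
    have h := hΩ.concaveOn.continuousOn isOpen_univ
    exact continuousOn_univ.mp h
  have hAcont : ∀ c', Continuous fun μ : S → S × A → ℝ => A' μ c' := by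
    intro c'
    simp only [hA']
    refine continuous_finset_sum _ fun s₀ _ => Continuous.mul continuous_const ?_
    refine continuous_finset_sum _ fun x _ => Continuous.mul continuous_const ?_
    exact (by fun_prop : Continuous fun μ : S → S × A → ℝ => μ s₀ x).sub continuous_const
  have hLcont : ∀ c', Continuous fun μ => Lbar μ c' := by
    intro c'
    simp only [hLbar]
    exact (hΩcont.neg.sub continuous_const).add (hAcont c')
  have hgcont : Continuous g := by
    rw [hg]
    exact (hLcont c).sub (hLcont ctil)
  clear_value A' g Δ
  -- boundedness of 𝒟
  have hC0 : (0:ℝ) ≤ (1 - γ)⁻¹ := by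
    have := hγ.2
    have h1 : (0:ℝ) < 1 - γ := by linarith
    positivity
  have hDbdd : Bornology.IsBounded 𝒟 := by
    rw [isBounded_iff_forall_norm_le]
    refine ⟨(1 - γ)⁻¹, fun μ hμ => ?_⟩
    rw [h𝒟] at hμ
    obtain ⟨π, rfl⟩ := hμ
    rw [pi_norm_le_iff_of_nonneg hC0]
    intro s₀
    rw [pi_norm_le_iff_of_nonneg hC0]
    intro x
    rw [Real.norm_eq_abs, abs_le]
    obtain ⟨h1, h2⟩ := muS_mem_Icc P π hγ hγη η hη s₀ x
    exact ⟨by linarith, h2⟩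
  set M : ℝ := Lbar μtil ctil with hMdef
  clear_value M
  have hFM : ∀ ν ∈ closure 𝒟, M ≤ Lbar ν ctil := by
    have hcl : closure 𝒟 ⊆ {ν | M ≤ Lbar ν ctil} :=
      closure_minimal (fun μ hμ => hμmin μ hμ)
        (isClosed_le continuous_const (hLcont ctil))
    exact fun ν hν => hcl hν
  have hKcomp : IsCompact (closure 𝒟 ∩ {ν | g ν = Δ/2}) := by
    apply Metric.isCompact_of_isClosed_isBounded
    · exact isClosed_closure.inter (isClosed_eq hgcont continuous_const)
    · exact Bornology.IsBounded.subset hDbdd.closure Set.inter_subset_left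
  -- lower bound on the Lagrangian along the segment of costs
  have hlow : ∀ t : ℝ, 0 ≤ t → t ≤ 1 → ∀ μ : S → S × A → ℝ,
      Lbar μ ctil + t * g μ ≤ Lbar μ ((1-t) • ctil + t • c) := by
    intro t ht ht1 μ
    have hψc := hψ.2 (Set.mem_univ ctil) (Set.mem_univ c)
      (by linarith : (0:ℝ) ≤ 1 - t) ht (by ring)
    simp only [smul_eq_mul] at hψc
    have hA := hK2 μ ctil c (1-t) t
    simp only [hg, hLbar]
    linarith
  -- the final contradiction machine
  have hbdd : BddBelow (Set.range fun μ : 𝒟 => Lbar (↑μ) ctil) := by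
    refine ⟨M, ?_⟩
    rintro y ⟨μ, rfl⟩
    exact hμmin μ μ.2
  have final : ∀ t : ℝ, 0 < t → t ≤ 1 →
      (∀ μ ∈ 𝒟, M + t * (Δ/2) ≤ Lbar μ ((1-t) • ctil + t • c)) → False := by
    intro t ht ht1 hb
    have h1 : M + t * (Δ/2) ≤ ⨅ μ : 𝒟, Lbar (↑μ) ((1-t) • ctil + t • c) :=
      le_ciInf fun μ => hb μ μ.2
    have h2 := hctil ((1-t) • ctil + t • c)
    have h3 : (⨅ μ : 𝒟, Lbar (↑μ) ctil) ≤ Lbar μtil ctil :=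
      ciInf_le hbdd ⟨μtil, hμD⟩
    rw [← hMdef] at h3
    nlinarith [mul_pos ht (half_pos hΔ)]
  -- the construction of points on the hyperplane {g = Δ/2}
  have hcons : ∀ μ ∈ 𝒟, g μ ≤ Δ/2 →
      ∃ s : ℝ, 0 < s ∧ s ≤ 1 ∧ s * (Δ - g μ) = Δ/2 ∧
        ((1-s) • μtil + s • μ ∈ 𝒟) ∧ g ((1-s) • μtil + s • μ) = Δ/2 := by
    intro μ hμ hle
    have hd2 : Δ/2 ≤ Δ - g μ := by linarith
    have hd0 : 0 < Δ - g μ := lt_of_lt_of_le (half_pos hΔ) hd2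
    refine ⟨(Δ/2)/(Δ - g μ), div_pos (half_pos hΔ) hd0, ?_, ?_, ?_, ?_⟩
    · rw [div_le_one hd0]; exact hd2
    · field_simp
    · exact h𝒟conv hμD hμ
        (by rw [sub_nonneg, div_le_one hd0]; exact hd2)
        (div_pos (half_pos hΔ) hd0).le (by ring)
    · rw [hgaff μtil μ (1 - (Δ/2)/(Δ - g μ)) ((Δ/2)/(Δ - g μ)) (by ring), ← hΔdef]
      have hsd : (Δ/2)/(Δ - g μ) * (Δ - g μ) = Δ/2 := by field_simp
      nlinarith [hsd]
  by_cases hKne : (closure 𝒟 ∩ {ν | g ν = Δ/2}).Nonempty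
  · -- K nonempty: get a uniform gap β
    obtain ⟨ν₀, hν₀K, hν₀min⟩ := hKcomp.exists_isMinOn hKne (hLcont ctil).continuousOn
    set β : ℝ := Lbar ν₀ ctil - M with hβdef
    clear_value β
    have hν₀cl : ν₀ ∈ closure 𝒟 := hν₀K.1
    have hgν₀ : g ν₀ = Δ/2 := hν₀K.2
    have hβ0 : 0 < β := by
      have hge : M ≤ Lbar ν₀ ctil := hFM ν₀ hν₀cl
      rcases eq_or_lt_of_le hge with heq | hlt
      · exfalso
        have hne : ν₀ ≠ μtil := by
          intro h
          rw [h, ← hΔdef] at hgν₀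
          linarith
        have hmid : ((1:ℝ)/2) • ν₀ + ((1:ℝ)/2) • μtil ∈ closure 𝒟 :=
          h𝒟conv.closure hν₀cl (subset_closure hμD)
            (by norm_num) (by norm_num) (by norm_num)
        have hst := hstrict ν₀ μtil (1/2) (1/2) hne one_half_pos one_half_pos (by norm_num)
        have h2 := hFM _ hmid
        rw [← hMdef] at hst
        linarith
      · rw [hβdef]; linarith
    -- quantitative lower bound for Lbar μ ctil when g μ ≤ Δ/2
    have hL2 : ∀ μ ∈ 𝒟, g μ ≤ Δ/2 →
        2 * β * (Δ - g μ) ≤ Δ * (Lbar μ ctil - M) := by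
      intro μ hμ hle
      obtain ⟨s, hs0, hs1, hsd, hνD, hgν⟩ := hcons μ hμ hle
      have hνK : (1-s) • μtil + s • μ ∈ closure 𝒟 ∩ {ν | g ν = Δ/2} := ⟨subset_closure hνD, hgν⟩
      have hβν : Lbar ν₀ ctil ≤ Lbar ((1-s) • μtil + s • μ) ctil := hν₀min hνK
      have hconvν : Lbar ((1-s) • μtil + s • μ) ctil
          ≤ (1-s) * Lbar μtil ctil + s * Lbar μ ctil :=
        hconv ctil μtil μ (1-s) s (by linarith) hs0.le (by ring)
      rw [← hMdef] at hconvν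
      have hkey : β ≤ s * (Lbar μ ctil - M) := by
        have := hβν.trans hconvν
        nlinarith [hβdef]
      have h8 : 2 * (Δ - g μ) * (s * (Lbar μ ctil - M)) = Δ * (Lbar μ ctil - M) := by
        have : s * (Δ - g μ) * 2 = Δ := by linarith [hsd]
        nlinarith [this]
      have hd0 : 0 < Δ - g μ := by linarith [half_pos hΔ]
      nlinarith [mul_le_mul_of_nonneg_left hkey (by linarith : (0:ℝ) ≤ 2 * (Δ - g μ))]
    -- pick t
    set t : ℝ := min (2*β/Δ) (1/2) with htdef
    have ht0 : 0 < t := lt_min (by positivity) one_half_pos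
    have ht1 : t ≤ 1 := le_trans (min_le_right _ _) (by norm_num)
    have htβ : t * Δ ≤ 2 * β := by
      have := min_le_left (2*β/Δ) (1/2)
      rw [← htdef] at this
      calc t * Δ ≤ (2*β/Δ) * Δ := mul_le_mul_of_nonneg_right this hΔ.le
        _ = 2 * β := by field_simp
    clear_value t
    refine final t ht0 ht1 (fun μ hμ => ?_)
    have h1 := hlow t ht0.le ht1 μ
    by_cases hgc : g μ ≤ Δ/2
    · have h2 := hL2 μ hμ hgc
      have h6 : 0 ≤ (2*β - t*Δ) * (Δ - g μ) :=
        mul_nonneg (by linarith) (by linarith [half_pos hΔ])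
      -- M + t*(Δ/2) ≤ Lbar μ ctil + t * g μ
      have h7 : Δ * (M + t * (Δ/2)) ≤ Δ * (Lbar μ ctil + t * g μ) := by
        nlinarith [mul_pos ht0 hΔ]
      have h9 : M + t * (Δ/2) ≤ Lbar μ ctil + t * g μ :=
        le_of_mul_le_mul_left h7 hΔ
      linarith
    · push_neg at hgc
      have h2 := hμmin μ hμ
      have h7 : t * (Δ/2) ≤ t * g μ := mul_le_mul_of_nonneg_left hgc.le ht0.le
      linarith
  · -- K empty: every μ ∈ 𝒟 has g μ > Δ/2
    have hgt : ∀ μ ∈ 𝒟, Δ/2 < g μ := by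
      intro μ hμ
      by_contra hle
      push_neg at hle
      obtain ⟨s, _, _, _, hνD, hgν⟩ := hcons μ hμ hle
      exact hKne ⟨_, subset_closure hνD, hgν⟩
    refine final (1/2) one_half_pos (by norm_num) (fun μ hμ => ?_)
    have h1 := hlow (1/2) (by norm_num) (by norm_num) μ
    have h2 := hμmin μ hμ
    have h3 := hgt μ hμ
    nlinarith
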